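/- With notation as in the paper's construction: the five domain pieces X∖S_i, S_{ii}, (S_i∖S_{ii})∩C_i(1), (S_i∖S_{ii})∩C_i(01), (S_i∖S_{ii})∩C_i(00) form a partition of the Cantor cube X, each a finite union of subcubes; the corresponding five range pieces (S_i∖S_{ii})∩C_i(10), S_{ii}, (S_i∖S_{ii})∩C_i(11), X∖S_i, (S_i∖S_{ii})∩C_i(0) also form a partition of X into finite unions of subcubes; and hence the map h_i defined piecewise by the canonical homeomorphisms L_{i,10}∘F_i, id, L_{i,1}, F_i⁻¹∘L_{i,01}⁻¹, L_{i,0}⁻¹ respectively is a well-defined rearrangement (element of XV). -/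

import Mathlib

/-- The group of self-homeomorphisms of a topological space. -/
instance homeoGroup (X : Type*) [TopologicalSpace X] : Group (X ≃ₜ X) where
  mul f g := g.trans f
  one := Homeomorph.refl X
  inv := Homeomorph.symm
  mul_assoc f g h := rfl
  one_mul f := rfl
  mul_one f := rfl
  inv_mul_cancel f := by ext x; exact f.symm_apply_apply x

/-- Prepend a finite word to an infinite sequence. -/
def prependSeq {A : Type*} (α : List A) (x : ℕ → A) : ℕ → A :=
  fun k => if h : k < α.length then α.get ⟨k, h⟩ else x (k - α.length)

/-- `x` begins with the finite word `α`. -/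
def beginsWith {A : Type*} (α : List A) (x : ℕ → A) : Prop :=
  ∃ y, x = prependSeq α y

/-- The subcube of the Cantor cube `∏ i, (A i)^ω` determined by a tuple of prefixes. -/
def subcube {ι : Type*} (A : ι → Type*) (α : ∀ i, List (A i)) :
    Set (∀ i, ℕ → A i) :=
  {x | ∀ i, beginsWith (α i) (x i)}

/-- Prepend a tuple of finite words coordinatewise. -/
def cubePrepend {ι : Type*} (A : ι → Type*) (α : ∀ i, List (A i))
    (y : ∀ i, ℕ → A i) : ∀ i, ℕ → A i :=
  fun i => prependSeq (α i) (y i)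


/-- Relators of a right-angled Artin group: commutators of adjacent generators. -/
def raagRels {V : Type*} (G : SimpleGraph V) : Set (FreeGroup V) :=
  {r | ∃ i j, G.Adj i j ∧
    r = FreeGroup.of i * FreeGroup.of j * (FreeGroup.of i)⁻¹ * (FreeGroup.of j)⁻¹}

/-- The right-angled Artin group of a simple graph. -/
def RAAG {V : Type*} (G : SimpleGraph V) := PresentedGroup (raagRels G)

noncomputable instance {V : Type*} (G : SimpleGraph V) : Group (RAAG G) := by
  unfold RAAG; infer_instance

/-- The standard generators of a right-angled Artin group. -/
def raagGen {V : Type*} (G : SimpleGraph V) (v : V) : RAAG G :=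
  PresentedGroup.of v

variable {n : ℕ}

/-- The set `P` of (unordered) pairs of non-commuting generators. -/
def ncP (G : SimpleGraph (Fin n)) : Set (Sym2 (Fin n)) :=
  {p | ∃ i j, p = s(i, j) ∧ ¬ Commute (raagGen G i) (raagGen G j)}

/-- Index set for the Cantor cube `X`: one binary coordinate for each generator
and one coordinate for each non-commuting pair. -/
def raagIdx (G : SimpleGraph (Fin n)) : Type := (Fin n) ⊕ (ncP G)

/-- The alphabets of the cube `X`: `{0,1}` for generator coordinates and
`{i, j, ∅}` for the coordinate of a pair `{i,j} ∈ P`. -/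
def raagAlph (G : SimpleGraph (Fin n)) : raagIdx G → Type :=
  fun k => match k with
  | Sum.inl _ => Bool
  | Sum.inr p => Option {v : Fin n // v ∈ (p : Sym2 (Fin n))}

noncomputable instance (G : SimpleGraph (Fin n)) (k : raagIdx G) :
    TopologicalSpace (raagAlph G k) := ⊥

instance (G : SimpleGraph (Fin n)) (k : raagIdx G) :
    DiscreteTopology (raagAlph G k) := ⟨rfl⟩

/-- The Cantor cube `X` of the construction. -/
abbrev raagCube (G : SimpleGraph (Fin n)) : Type := ∀ k, ℕ → raagAlph G k

/-- `C_i(α)`: points whose binary coordinate `x_i` begins with `α`. -/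
def Cset (G : SimpleGraph (Fin n)) (i : Fin n) (α : List Bool) :
    Set (raagCube G) :=
  {x | beginsWith α (x (Sum.inl i))}

/-- `S_i`: points all of whose coordinates `x_{ij}`, `j ∈ P_i`, begin with `i`. -/
def Scube (G : SimpleGraph (Fin n)) (i : Fin n) : Set (raagCube G) :=
  {x | ∀ (p : ncP G) (h : i ∈ (p : Sym2 (Fin n))), x (Sum.inr p) 0 = some ⟨i, h⟩}

open Classical in
/-- `F_i`: prepend the symbol `i` to each coordinate `x_{ij}`, `j ∈ P_i`. -/
noncomputable def Fmap (G : SimpleGraph (Fin n)) (i : Fin n) :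
    raagCube G → raagCube G := fun x k =>
  match k with
  | Sum.inl j => x (Sum.inl j)
  | Sum.inr p =>
      if h : i ∈ (p : Sym2 (Fin n)) then
        prependSeq [some ⟨i, h⟩] (x (Sum.inr p))
      else x (Sum.inr p)

open Classical in
/-- `F_i⁻¹`: delete the first symbol of each coordinate `x_{ij}`, `j ∈ P_i`. -/
noncomputable def Fdrop (G : SimpleGraph (Fin n)) (i : Fin n) :
    raagCube G → raagCube G := fun x k =>
  match k with
  | Sum.inl j => x (Sum.inl j)
  | Sum.inr p =>
      if i ∈ (p : Sym2 (Fin n)) then (fun m => x (Sum.inr p) (m + 1))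
      else x (Sum.inr p)

/-- `L_{i,α}`: prepend the binary word `α` to the coordinate `x_i`. -/
def Lmap (G : SimpleGraph (Fin n)) (i : Fin n) (α : List Bool) :
    raagCube G → raagCube G := fun x k =>
  match k with
  | Sum.inl j => if j = i then prependSeq α (x (Sum.inl j)) else x (Sum.inl j)
  | Sum.inr p => x (Sum.inr p)

/-- `L_{i,α}⁻¹` for a word of length `m`: delete the first `m` symbols of `x_i`. -/
def Ldrop (G : SimpleGraph (Fin n)) (i : Fin n) (m : ℕ) :
    raagCube G → raagCube G := fun x k =>
  match k with
  | Sum.inl j => if j = i then (fun t => x (Sum.inl j) (t + m)) else x (Sum.inl j)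
  | Sum.inr p => x (Sum.inr p)

/-- `S_{ii} = F_i(S_i)`. -/
def Sii (G : SimpleGraph (Fin n)) (i : Fin n) : Set (raagCube G) :=
  Fmap G i '' Scube G i

open Classical in
/-- The five-piece homeomorphism `h_i` of the paper's construction. -/
noncomputable def hmap (G : SimpleGraph (Fin n)) (i : Fin n) :
    raagCube G → raagCube G := fun x =>
  if x ∉ Scube G i then Lmap G i [true, false] (Fmap G i x)
  else if x ∈ Sii G i then x
  else if beginsWith [true] (x (Sum.inl i)) then Lmap G i [true] x
  else if beginsWith [false, true] (x (Sum.inl i)) then Fdrop G i (Ldrop G i 2 x)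
  else Ldrop G i 1 x

/-- A set is a finite union of subcubes. -/
def FinUnionSubcubes {ι : Type*} (A : ι → Type*) (E : Set (∀ i, ℕ → A i)) : Prop :=
  ∃ (k : ℕ) (β : Fin k → ∀ i, List (A i)), E = ⋃ a, subcube A (β a)

/-- A homeomorphism of a Cantor cube is a rearrangement if it maps a partition of
the cube into subcubes onto another such partition via the canonical
prefix-replacement homeomorphisms. -/
def IsRearrangement {ι : Type*} (A : ι → Type*) [∀ i, TopologicalSpace (A i)]
    (h : (∀ i, ℕ → A i) ≃ₜ (∀ i, ℕ → A i)) : Prop :=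
  ∃ (k : ℕ) (D R : Fin k → ∀ i, List (A i)),
    (⋃ a, subcube A (D a)) = Set.univ ∧
    (∀ a b, a ≠ b → Disjoint (subcube A (D a)) (subcube A (D b))) ∧
    (⋃ a, subcube A (R a)) = Set.univ ∧
    (∀ a b, a ≠ b → Disjoint (subcube A (R a)) (subcube A (R b))) ∧
    ∀ a y, h (cubePrepend A (D a) y) = cubePrepend A (R a) y

namespace RearrAux

variable {A : Type*}

@[simp] theorem prependSeq_nil (y : ℕ → A) : prependSeq ([] : List A) y = y := by
  funext k; simp [prependSeq]

@[simp] theorem prependSeq_cons_zero (a : A) (l : List A) (y : ℕ → A) :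
    prependSeq (a :: l) y 0 = a := by simp [prependSeq]

@[simp] theorem prependSeq_cons_succ (a : A) (l : List A) (y : ℕ → A) (k : ℕ) :
    prependSeq (a :: l) y (k + 1) = prependSeq l y k := by
  simp only [prependSeq, List.length_cons]
  by_cases h : k < l.length
  · rw [dif_pos (by omega : k + 1 < l.length + 1), dif_pos h]
    rfl
  · rw [dif_neg (by omega), dif_neg h]
    congr 1; omega

theorem prependSeq_inj {l : List A} {y z : ℕ → A}
    (h : prependSeq l y = prependSeq l z) : y = z := by
  funext k
  have := congrFun h (k + l.length)
  simpa [prependSeq, Nat.add_sub_cancel] using this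

theorem beginsWith_one {a : A} {x : ℕ → A} : beginsWith [a] x ↔ x 0 = a := by
  constructor
  · rintro ⟨y, rfl⟩; simp
  · intro h
    refine ⟨fun m => x (m + 1), funext fun k => ?_⟩
    cases k with
    | zero => simpa using h
    | succ k => simp

theorem beginsWith_two {a b : A} {x : ℕ → A} :
    beginsWith [a, b] x ↔ x 0 = a ∧ x 1 = b := by
  constructor
  · rintro ⟨y, rfl⟩; simp
  · rintro ⟨h0, h1⟩
    refine ⟨fun m => x (m + 2), funext fun k => ?_⟩
    match k with
    | 0 => simpa using h0
    | 1 => simpa using h1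
    | (k+2) => simp

theorem beginsWith_prependSeq (l : List A) (y : ℕ → A) :
    beginsWith l (prependSeq l y) := ⟨y, rfl⟩

theorem subcube_eq_range {ι : Type*} (A : ι → Type*) (α : ∀ i, List (A i)) :
    subcube A α = Set.range (cubePrepend A α) := by
  ext x
  constructor
  · intro hx
    choose y hy using hx
    exact ⟨y, funext fun k => (hy k).symm⟩
  · rintro ⟨y, rfl⟩
    exact fun k => beginsWith_prependSeq _ _

theorem cubePrepend_mem {ι : Type*} (A : ι → Type*) (α : ∀ i, List (A i))
    (y : ∀ i, ℕ → A i) : cubePrepend A α y ∈ subcube A α :=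
  fun k => beginsWith_prependSeq _ _

end RearrAux

namespace RearrAux

open RearrAux

variable {n : ℕ} (G : SimpleGraph (Fin n)) (i : Fin n)

/-- The pairs containing `i`. -/
abbrev PairsAt : Type := {p : ncP G // i ∈ (p : Sym2 (Fin n))}

/-- The constant-`i` symbol family. -/
def ci : ∀ p : PairsAt G i, raagAlph G (Sum.inr p.1) := fun p => some ⟨i, p.2⟩

/-- Symbol families for position 0 (resp. 1) on the pair coordinates. -/
abbrev SymFam : Type := ∀ p : PairsAt G i, raagAlph G (Sum.inr p.1)

/-- Prefix tuple: `[f p]` on each pair coordinate containing `i`, nothing else. -/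
def pre1 (f : SymFam G i) : ∀ k : raagIdx G, List (raagAlph G k) := fun k =>
  match k with
  | Sum.inl _ => []
  | Sum.inr p => if h : i ∈ (p : Sym2 (Fin n)) then [f ⟨p, h⟩] else []

/-- Prefix tuple: `α` on coordinate `i`, `[i, g p]` on each pair coordinate. -/
def pre2 (α : List Bool) (g : SymFam G i) : ∀ k : raagIdx G, List (raagAlph G k) := fun k =>
  match k with
  | Sum.inl j => if j = i then α else []
  | Sum.inr p => if h : i ∈ (p : Sym2 (Fin n)) then [some ⟨i, h⟩, g ⟨p, h⟩] else []

theorem mem_cube1 {f : SymFam G i} {x : raagCube G} :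
    x ∈ subcube (raagAlph G) (pre1 G i f) ↔ ∀ p : PairsAt G i, x (Sum.inr p.1) 0 = f p := by
  constructor
  · intro hx p
    have := hx (Sum.inr p.1)
    rw [show pre1 G i f (Sum.inr p.1) = [f p] by simp [pre1, p.2]] at this
    exact beginsWith_one.1 this
  · intro hx k
    match k with
    | Sum.inl j => exact ⟨x (Sum.inl j), by simp [pre1]⟩
    | Sum.inr p =>
      by_cases h : i ∈ (p : Sym2 (Fin n))
      · rw [show pre1 G i f (Sum.inr p) = [f ⟨p, h⟩] by simp [pre1, h]]
        exact beginsWith_one.2 (hx ⟨p, h⟩)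
      · exact ⟨x (Sum.inr p), by simp [pre1, h]⟩

theorem mem_cube2 {α : List Bool} {g : SymFam G i} {x : raagCube G} :
    x ∈ subcube (raagAlph G) (pre2 G i α g) ↔
      beginsWith α (x (Sum.inl i)) ∧
      ∀ p : PairsAt G i, x (Sum.inr p.1) 0 = ci G i p ∧ x (Sum.inr p.1) 1 = g p := by
  constructor
  · intro hx
    constructor
    · have := hx (Sum.inl i)
      rwa [show pre2 G i α g (Sum.inl i) = α by simp [pre2]; rfl] at this
    · intro p
      have := hx (Sum.inr p.1)
      rw [show pre2 G i α g (Sum.inr p.1) = [some ⟨i, p.2⟩, g p] by simp [pre2, p.2]; rfl] at this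
      exact beginsWith_two.1 this
  · rintro ⟨h1, h2⟩ k
    match k with
    | Sum.inl j =>
      rcases eq_or_ne j i with hj | hj
      · rw [show pre2 G i α g (Sum.inl j) = α by simp [pre2, hj]; rfl]
        rw [hj]; exact h1
      · exact ⟨x (Sum.inl j), by simp [pre2, hj]⟩
    | Sum.inr p =>
      by_cases h : i ∈ (p : Sym2 (Fin n))
      · rw [show pre2 G i α g (Sum.inr p) = [some ⟨i, h⟩, g ⟨p, h⟩] by simp [pre2, h]; rfl]
        exact beginsWith_two.2 (h2 ⟨p, h⟩)
      · exact ⟨x (Sum.inr p), by simp [pre2, h]⟩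

theorem mem_Scube {x : raagCube G} :
    x ∈ Scube G i ↔ ∀ p : PairsAt G i, x (Sum.inr p.1) 0 = ci G i p := by
  constructor
  · intro hx p; exact hx p.1 p.2
  · intro hx p h; exact hx ⟨p, h⟩

theorem mem_Sii {x : raagCube G} :
    x ∈ Sii G i ↔ ∀ p : PairsAt G i,
      x (Sum.inr p.1) 0 = ci G i p ∧ x (Sum.inr p.1) 1 = ci G i p := by
  constructor
  · rintro ⟨z, hz, rfl⟩ p
    have h0 := (mem_Scube G i).1 hz p
    constructor <;> simp [Fmap, ci, p.2, h0]
    · rfl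
    · exact h0
  · intro hx
    refine ⟨Fdrop G i x, ?_, ?_⟩
    · rw [mem_Scube]
      intro p
      have := (hx p).2
      simpa [Fdrop, p.2] using this
    · funext k
      match k with
      | Sum.inl j => rfl
      | Sum.inr p =>
        by_cases h : i ∈ (p : Sym2 (Fin n))
        · have h0 := (hx ⟨p, h⟩).1
          simp only [Fmap, Fdrop, h, if_pos, dif_pos]
          funext m
          cases m with
          | zero => exact h0.symm
          | succ m => rfl
        · simp [Fmap, Fdrop, h]

end RearrAux
namespace RearrAux

variable {n : ℕ} (G : SimpleGraph (Fin n)) (i : Fin n)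

theorem beginsWith_nil {A : Type*} (x : ℕ → A) : beginsWith ([] : List A) x :=
  ⟨x, (prependSeq_nil x).symm⟩

/-- Symbol families different from the constant-`i` family. -/
abbrev NCFam : Type := {f : SymFam G i // f ≠ ci G i}

theorem compl_Scube_eq :
    (Scube G i)ᶜ = ⋃ f : NCFam G i, subcube (raagAlph G) (pre1 G i f.1) := by
  ext x
  simp only [Set.mem_compl_iff, Set.mem_iUnion, mem_cube1, mem_Scube]
  constructor
  · intro hx
    refine ⟨⟨fun p => x (Sum.inr p.1) 0, ?_⟩, fun p => rfl⟩
    intro hc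
    exact hx fun p => congrFun hc p
  · rintro ⟨⟨f, hf⟩, hx⟩ hc
    rcases Function.ne_iff.1 hf with ⟨p, hp⟩
    exact hp ((hx p).symm.trans (hc p))

theorem Sii_eq : Sii G i = subcube (raagAlph G) (pre2 G i [] (ci G i)) := by
  ext x
  rw [mem_Sii, mem_cube2]
  exact ⟨fun h => ⟨beginsWith_nil _, h⟩, fun h => h.2⟩

theorem piece_eq (α : List Bool) :
    (Scube G i \ Sii G i) ∩ Cset G i α
      = ⋃ g : NCFam G i, subcube (raagAlph G) (pre2 G i α g.1) := by
  ext x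
  simp only [Set.mem_inter_iff, Set.mem_diff, Set.mem_iUnion, mem_cube2,
    mem_Scube, mem_Sii, Cset, Set.mem_setOf_eq]
  constructor
  · rintro ⟨⟨hS, hSii⟩, hC⟩
    refine ⟨⟨fun p => x (Sum.inr p.1) 1, ?_⟩, hC, fun p => ⟨hS p, rfl⟩⟩
    intro hc
    exact hSii fun p => ⟨hS p, congrFun hc p⟩
  · rintro ⟨⟨g, hg⟩, hC, hx⟩
    refine ⟨⟨fun p => (hx p).1, fun hSii => ?_⟩, hC⟩
    rcases Function.ne_iff.1 hg with ⟨p, hp⟩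
    exact hp ((hx p).2.symm.trans ((hSii p).2))

theorem Sii_subset : Sii G i ⊆ Scube G i := by
  intro x hx
  rw [mem_Scube]
  exact fun p => ((mem_Sii G i).1 hx p).1

end RearrAux
namespace RearrAux

variable {n : ℕ} (G : SimpleGraph (Fin n)) (i : Fin n)

theorem prependSeq_singleton_prepend {A : Type*} (a : A) (l : List A) (y : ℕ → A) :
    prependSeq [a] (prependSeq l y) = prependSeq (a :: l) y := by
  funext k; cases k <;> simp

open Classical in
/-- The inverse of `hmap`. -/
noncomputable def hinv : raagCube G → raagCube G := fun x =>
  if x ∉ Scube G i then Lmap G i [false, true] (Fmap G i x)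
  else if x ∈ Sii G i then x
  else if beginsWith [true, false] (x (Sum.inl i)) then Fdrop G i (Ldrop G i 2 x)
  else if beginsWith [true, true] (x (Sum.inl i)) then Ldrop G i 1 x
  else Lmap G i [false] x

variable {G i}

theorem pre1_not_Scube {f : SymFam G i} (hf : f ≠ ci G i) (y : raagCube G) :
    cubePrepend (raagAlph G) (pre1 G i f) y ∉ Scube G i := by
  rw [mem_Scube]
  intro hc
  apply hf
  funext p
  have := hc p
  simpa [cubePrepend, pre1, p.2] using this

theorem pre2_eval_inl_i (α : List Bool) (g : SymFam G i) (y : raagCube G) :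
    cubePrepend (raagAlph G) (pre2 G i α g) y (Sum.inl i)
      = prependSeq α (y (Sum.inl i)) := by
  simp [cubePrepend, pre2]
  rfl

theorem pre2_eval_inr {α : List Bool} {g : SymFam G i} {y : raagCube G}
    (p : ncP G) (h : i ∈ (p : Sym2 (Fin n))) :
    cubePrepend (raagAlph G) (pre2 G i α g) y (Sum.inr p)
      = prependSeq [some ⟨i, h⟩, g ⟨p, h⟩] (y (Sum.inr p)) := by
  simp [cubePrepend, pre2, h]
  rfl

theorem pre2_Scube (α : List Bool) (g : SymFam G i) (y : raagCube G) :
    cubePrepend (raagAlph G) (pre2 G i α g) y ∈ Scube G i := by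
  rw [mem_Scube]
  intro p
  rw [pre2_eval_inr p.1 p.2]
  simp [ci]
  rfl

theorem pre2_not_Sii {g : SymFam G i} (hg : g ≠ ci G i) (α : List Bool) (y : raagCube G) :
    cubePrepend (raagAlph G) (pre2 G i α g) y ∉ Sii G i := by
  rw [mem_Sii]
  intro hc
  apply hg
  funext p
  have := (hc p).2
  rw [pre2_eval_inr p.1 p.2] at this
  exact this

theorem pre2_Sii (y : raagCube G) :
    cubePrepend (raagAlph G) (pre2 G i [] (ci G i)) y ∈ Sii G i := by
  rw [mem_Sii]
  intro p
  rw [pre2_eval_inr p.1 p.2]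
  simp [ci]
  exact ⟨rfl, rfl⟩

theorem hmap_pre0 {f : SymFam G i} (hf : f ≠ ci G i) (y : raagCube G) :
    hmap G i (cubePrepend (raagAlph G) (pre1 G i f) y)
      = cubePrepend (raagAlph G) (pre2 G i [true, false] f) y := by
  rw [hmap, if_pos (pre1_not_Scube hf y)]
  funext k
  match k with
  | Sum.inl j =>
    by_cases hj : j = i <;>
      simp [Lmap, Fmap, cubePrepend, pre1, pre2, hj]
  | Sum.inr p =>
    by_cases h : i ∈ (p : Sym2 (Fin n)) <;>
      simp [Lmap, Fmap, cubePrepend, pre1, pre2, h, prependSeq_singleton_prepend]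
    exact prependSeq_singleton_prepend _ _ _

theorem hmap_pre1' (y : raagCube G) :
    hmap G i (cubePrepend (raagAlph G) (pre2 G i [] (ci G i)) y)
      = cubePrepend (raagAlph G) (pre2 G i [] (ci G i)) y := by
  rw [hmap, if_neg (not_not_intro (pre2_Scube [] (ci G i) y)),
    if_pos (pre2_Sii y)]

theorem hmap_pre2 {g : SymFam G i} (hg : g ≠ ci G i) (y : raagCube G) :
    hmap G i (cubePrepend (raagAlph G) (pre2 G i [true] g) y)
      = cubePrepend (raagAlph G) (pre2 G i [true, true] g) y := by
  rw [hmap, if_neg (not_not_intro (pre2_Scube [true] g y)),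
    if_neg (pre2_not_Sii hg [true] y),
    if_pos (by rw [pre2_eval_inl_i]; exact beginsWith_prependSeq _ _)]
  funext k
  match k with
  | Sum.inl j =>
    by_cases hj : j = i <;>
      simp [Lmap, cubePrepend, pre2, hj, prependSeq_singleton_prepend]
    exact prependSeq_singleton_prepend _ _ _
  | Sum.inr p =>
    by_cases h : i ∈ (p : Sym2 (Fin n)) <;>
      simp [Lmap, cubePrepend, pre2, h]

theorem hmap_pre3 {g : SymFam G i} (hg : g ≠ ci G i) (y : raagCube G) :
    hmap G i (cubePrepend (raagAlph G) (pre2 G i [false, true] g) y)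
      = cubePrepend (raagAlph G) (pre1 G i g) y := by
  rw [hmap, if_neg (not_not_intro (pre2_Scube [false, true] g y)),
    if_neg (pre2_not_Sii hg [false, true] y),
    if_neg (by rw [pre2_eval_inl_i]; intro hb; exact Bool.false_ne_true (beginsWith_one.1 hb)),
    if_pos (by rw [pre2_eval_inl_i]; exact beginsWith_prependSeq _ _)]
  funext k
  match k with
  | Sum.inl j =>
    by_cases hj : j = i
    · funext t
      simp [Fdrop, Ldrop, cubePrepend, pre1, pre2, hj]
      rfl
    · simp [Fdrop, Ldrop, cubePrepend, pre1, pre2, hj]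
  | Sum.inr p =>
    by_cases h : i ∈ (p : Sym2 (Fin n))
    · funext m
      simp [Fdrop, Ldrop, cubePrepend, pre1, pre2, h]
      exact prependSeq_cons_succ _ _ _ _
    · simp [Fdrop, Ldrop, cubePrepend, pre1, pre2, h]

theorem hmap_pre4 {g : SymFam G i} (hg : g ≠ ci G i) (y : raagCube G) :
    hmap G i (cubePrepend (raagAlph G) (pre2 G i [false, false] g) y)
      = cubePrepend (raagAlph G) (pre2 G i [false] g) y := by
  rw [hmap, if_neg (not_not_intro (pre2_Scube [false, false] g y)),
    if_neg (pre2_not_Sii hg [false, false] y),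
    if_neg (by rw [pre2_eval_inl_i]; intro hb; exact Bool.false_ne_true (beginsWith_one.1 hb)),
    if_neg (by rw [pre2_eval_inl_i]; intro hb; exact Bool.false_ne_true (beginsWith_two.1 hb).2)]
  funext k
  match k with
  | Sum.inl j =>
    by_cases hj : j = i
    · funext t
      simp [Ldrop, cubePrepend, pre2, hj]
      exact prependSeq_cons_succ _ _ _ _
    · simp [Ldrop, cubePrepend, pre2, hj]
  | Sum.inr p =>
    simp [Ldrop, cubePrepend, pre2]

theorem hinv_pre0 {f : SymFam G i} (hf : f ≠ ci G i) (y : raagCube G) :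
    hinv G i (cubePrepend (raagAlph G) (pre2 G i [true, false] f) y)
      = cubePrepend (raagAlph G) (pre1 G i f) y := by
  rw [hinv, if_neg (not_not_intro (pre2_Scube [true, false] f y)),
    if_neg (pre2_not_Sii hf [true, false] y),
    if_pos (by rw [pre2_eval_inl_i]; exact beginsWith_prependSeq _ _)]
  funext k
  match k with
  | Sum.inl j =>
    by_cases hj : j = i
    · funext t
      simp [Fdrop, Ldrop, cubePrepend, pre1, pre2, hj]
      rfl
    · simp [Fdrop, Ldrop, cubePrepend, pre1, pre2, hj]
  | Sum.inr p =>
    by_cases h : i ∈ (p : Sym2 (Fin n))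
    · funext m
      simp [Fdrop, Ldrop, cubePrepend, pre1, pre2, h]
      exact prependSeq_cons_succ _ _ _ _
    · simp [Fdrop, Ldrop, cubePrepend, pre1, pre2, h]

theorem hinv_pre1' (y : raagCube G) :
    hinv G i (cubePrepend (raagAlph G) (pre2 G i [] (ci G i)) y)
      = cubePrepend (raagAlph G) (pre2 G i [] (ci G i)) y := by
  rw [hinv, if_neg (not_not_intro (pre2_Scube [] (ci G i) y)),
    if_pos (pre2_Sii y)]

theorem hinv_pre2 {g : SymFam G i} (hg : g ≠ ci G i) (y : raagCube G) :
    hinv G i (cubePrepend (raagAlph G) (pre2 G i [true, true] g) y)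
      = cubePrepend (raagAlph G) (pre2 G i [true] g) y := by
  rw [hinv, if_neg (not_not_intro (pre2_Scube [true, true] g y)),
    if_neg (pre2_not_Sii hg [true, true] y),
    if_neg (by rw [pre2_eval_inl_i]; intro hb; exact Bool.false_ne_true (beginsWith_two.1 hb).2.symm),
    if_pos (by rw [pre2_eval_inl_i]; exact beginsWith_prependSeq _ _)]
  funext k
  match k with
  | Sum.inl j =>
    by_cases hj : j = i
    · funext t
      simp [Ldrop, cubePrepend, pre2, hj]
      exact prependSeq_cons_succ _ _ _ _
    · simp [Ldrop, cubePrepend, pre2, hj]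
  | Sum.inr p =>
    simp [Ldrop, cubePrepend, pre2]

theorem hinv_pre3 {g : SymFam G i} (hg : g ≠ ci G i) (y : raagCube G) :
    hinv G i (cubePrepend (raagAlph G) (pre1 G i g) y)
      = cubePrepend (raagAlph G) (pre2 G i [false, true] g) y := by
  rw [hinv, if_pos (pre1_not_Scube hg y)]
  funext k
  match k with
  | Sum.inl j =>
    by_cases hj : j = i <;>
      simp [Lmap, Fmap, cubePrepend, pre1, pre2, hj]
  | Sum.inr p =>
    by_cases h : i ∈ (p : Sym2 (Fin n)) <;>
      simp [Lmap, Fmap, cubePrepend, pre1, pre2, h, prependSeq_singleton_prepend]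
    exact prependSeq_singleton_prepend _ _ _

theorem hinv_pre4 {g : SymFam G i} (hg : g ≠ ci G i) (y : raagCube G) :
    hinv G i (cubePrepend (raagAlph G) (pre2 G i [false] g) y)
      = cubePrepend (raagAlph G) (pre2 G i [false, false] g) y := by
  rw [hinv, if_neg (not_not_intro (pre2_Scube [false] g y)),
    if_neg (pre2_not_Sii hg [false] y),
    if_neg (by rw [pre2_eval_inl_i]; intro hb; exact Bool.false_ne_true (beginsWith_two.1 hb).1),
    if_neg (by rw [pre2_eval_inl_i]; intro hb; exact Bool.false_ne_true (beginsWith_two.1 hb).1)]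
  funext k
  match k with
  | Sum.inl j =>
    by_cases hj : j = i <;>
      simp [Lmap, cubePrepend, pre2, hj, prependSeq_singleton_prepend]
    exact prependSeq_singleton_prepend _ _ _
  | Sum.inr p =>
    simp [Lmap, cubePrepend, pre2]

end RearrAux
namespace RearrAux

theorem prependSeq_get {A : Type*} (l : List A) (y : ℕ → A) (k : ℕ) (h : k < l.length) :
    prependSeq l y k = l.get ⟨k, h⟩ := dif_pos h

theorem prependSeq_add {A : Type*} (l : List A) (y : ℕ → A) (m : ℕ) :
    prependSeq l y (m + l.length) = y m := by
  simp [prependSeq, Nat.add_sub_cancel]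

theorem beginsWith_iff_forall {A : Type*} {l : List A} {x : ℕ → A} :
    beginsWith l x ↔ ∀ m : Fin l.length, x m = l.get m := by
  constructor
  · rintro ⟨y, rfl⟩ m
    exact prependSeq_get l y m m.2
  · intro h
    refine ⟨fun m => x (m + l.length), funext fun k => ?_⟩
    by_cases hk : k < l.length
    · rw [prependSeq_get l _ k hk]
      exact h ⟨k, hk⟩
    · unfold prependSeq
      rw [dif_neg hk]
      congr 1
      omega

theorem beginsWith_head {A : Type*} {a : A} {l : List A} {x : ℕ → A}
    (h : beginsWith (a :: l) x) : x 0 = a := by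
  obtain ⟨y, rfl⟩ := h; simp

theorem beginsWith_second {A : Type*} {a b : A} {l : List A} {x : ℕ → A}
    (h : beginsWith (a :: b :: l) x) : x 1 = b := by
  obtain ⟨y, rfl⟩ := h; simp

/-- Delete the prefixes from every coordinate. -/
def cubeDrop {ι : Type*} {A : ι → Type*} (α : ∀ i, List (A i))
    (x : ∀ i, ℕ → A i) : ∀ i, ℕ → A i :=
  fun i m => x i (m + (α i).length)

theorem cubeDrop_prepend {ι : Type*} {A : ι → Type*} (α : ∀ i, List (A i))
    (y : ∀ i, ℕ → A i) : cubeDrop α (cubePrepend A α y) = y := by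
  funext k m
  exact prependSeq_add _ _ _

theorem eq_prepend_drop {ι : Type*} {A : ι → Type*} {α : ∀ i, List (A i)}
    {x : ∀ i, ℕ → A i} (hx : x ∈ subcube A α) :
    x = cubePrepend A α (cubeDrop α x) := by
  rw [subcube_eq_range] at hx
  obtain ⟨y, rfl⟩ := hx
  rw [cubeDrop_prepend]

section Top

variable {ι : Type*} {A : ι → Type*} [∀ i, TopologicalSpace (A i)]
  [∀ i, DiscreteTopology (A i)]

theorem continuous_eval (k : ι) (m : ℕ) :
    Continuous fun x : ∀ i, ℕ → A i => x k m :=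
  (continuous_apply m).comp (continuous_apply k)

theorem isOpen_subcube [Finite ι] (α : ∀ i, List (A i)) :
    IsOpen (subcube A α) := by
  have : subcube A α = ⋂ (k : ι), ⋂ (m : Fin (α k).length),
      {x : ∀ i, ℕ → A i | x k m = (α k).get m} := by
    ext x
    simp only [subcube, Set.mem_setOf_eq, Set.mem_iInter, beginsWith_iff_forall]
  rw [this]
  refine isOpen_iInter_of_finite fun k => isOpen_iInter_of_finite fun m => ?_
  exact (continuous_eval k (m : ℕ)).isOpen_preimage {(α k).get m} (isOpen_discrete _)

theorem continuous_prepend_drop (α β : ∀ i, List (A i)) :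
    Continuous fun x : ∀ i, ℕ → A i => cubePrepend A β (cubeDrop α x) := by
  refine continuous_pi fun k => continuous_pi fun m => ?_
  unfold cubePrepend cubeDrop prependSeq
  by_cases h : m < (β k).length
  · simp only [dif_pos h]
    exact continuous_const
  · simp only [dif_neg h]
    exact continuous_eval k _

theorem continuous_of_cover [Finite ι] {T : Type*} (Df Rf : T → ∀ i, List (A i))
    (h : (∀ i, ℕ → A i) → (∀ i, ℕ → A i))
    (hcov : ∀ x, ∃ t, x ∈ subcube A (Df t))
    (hpre : ∀ t y, h (cubePrepend A (Df t) y) = cubePrepend A (Rf t) y) :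
    Continuous h := by
  rw [continuous_iff_continuousAt]
  intro x
  obtain ⟨t, hx⟩ := hcov x
  have heq : Set.EqOn h (fun z => cubePrepend A (Rf t) (cubeDrop (Df t) z))
      (subcube A (Df t)) := by
    intro z hz
    conv_lhs => rw [eq_prepend_drop hz]
    exact hpre t _
  exact ((continuous_prepend_drop (Df t) (Rf t)).continuousOn.congr heq).continuousAt
    ((isOpen_subcube (Df t)).mem_nhds hx)

end Top

section Disj

variable {n : ℕ} {G : SimpleGraph (Fin n)} {i : Fin n}

theorem disj_cube1_cube1 {f f' : SymFam G i} (hff : f ≠ f') :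
    Disjoint (subcube (raagAlph G) (pre1 G i f)) (subcube (raagAlph G) (pre1 G i f')) := by
  rw [Set.disjoint_left]
  intro x h1 h2
  apply hff
  funext p
  exact ((mem_cube1 G i).1 h1 p).symm.trans ((mem_cube1 G i).1 h2 p)

theorem disj_cube1_cube2 {f : SymFam G i} (hf : f ≠ ci G i) (α : List Bool) (g : SymFam G i) :
    Disjoint (subcube (raagAlph G) (pre1 G i f)) (subcube (raagAlph G) (pre2 G i α g)) := by
  rw [Set.disjoint_left]
  intro x h1 h2
  obtain ⟨p, hp⟩ := Function.ne_iff.1 hf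
  exact hp (((mem_cube1 G i).1 h1 p).symm.trans (((mem_cube2 G i).1 h2).2 p).1)

theorem disj_cube2_cube2 {g g' : SymFam G i} (hgg : g ≠ g') (α α' : List Bool) :
    Disjoint (subcube (raagAlph G) (pre2 G i α g)) (subcube (raagAlph G) (pre2 G i α' g')) := by
  rw [Set.disjoint_left]
  intro x h1 h2
  apply hgg
  funext p
  exact (((mem_cube2 G i).1 h1).2 p).2.symm.trans (((mem_cube2 G i).1 h2).2 p).2

theorem disj_cube2_head {a b : Bool} (hab : a ≠ b) (l l' : List Bool) (g g' : SymFam G i) :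
    Disjoint (subcube (raagAlph G) (pre2 G i (a :: l) g))
      (subcube (raagAlph G) (pre2 G i (b :: l') g')) := by
  rw [Set.disjoint_left]
  intro x h1 h2
  exact hab ((beginsWith_head ((mem_cube2 G i).1 h1).1).symm.trans
    (beginsWith_head ((mem_cube2 G i).1 h2).1))

theorem disj_cube2_second {a a' b b' : Bool} (hbb : b ≠ b') (l l' : List Bool)
    (g g' : SymFam G i) :
    Disjoint (subcube (raagAlph G) (pre2 G i (a :: b :: l) g))
      (subcube (raagAlph G) (pre2 G i (a' :: b' :: l') g')) := by
  rw [Set.disjoint_left]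
  intro x h1 h2
  exact hbb ((beginsWith_second ((mem_cube2 G i).1 h1).1).symm.trans
    (beginsWith_second ((mem_cube2 G i).1 h2).1))

end Disj

end RearrAux
namespace RearrAux

variable {n : ℕ} (G : SimpleGraph (Fin n)) (i : Fin n)

instance : Finite (raagIdx G) := inferInstanceAs (Finite ((Fin n) ⊕ (ncP G)))

instance (k : raagIdx G) : Finite (raagAlph G k) :=
  match k with
  | Sum.inl _ => inferInstanceAs (Finite Bool)
  | Sum.inr p => inferInstanceAs (Finite (Option {v : Fin n // v ∈ (p : Sym2 (Fin n))}))

instance : Finite (SymFam G i) := @Pi.finite _ _ Subtype.finite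
  (fun p => inferInstanceAs (Finite (Option {v : Fin n // v ∈ (p.1 : Sym2 (Fin n))})))

instance : Finite (NCFam G i) := Subtype.finite

/-- The index type for the rearrangement partition. -/
abbrev Tidx : Type := Unit ⊕ (Fin 4 × NCFam G i)

/-- Domain prefixes. -/
def Dfam : Tidx G i → ∀ k, List (raagAlph G k) := fun t =>
  match t with
  | Sum.inl _ => pre2 G i [] (ci G i)
  | Sum.inr (c, f) =>
      if c = 0 then pre1 G i f.1
      else if c = 1 then pre2 G i [true] f.1
      else if c = 2 then pre2 G i [false, true] f.1
      else pre2 G i [false, false] f.1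

/-- Range prefixes. -/
def Rfam : Tidx G i → ∀ k, List (raagAlph G k) := fun t =>
  match t with
  | Sum.inl _ => pre2 G i [] (ci G i)
  | Sum.inr (c, f) =>
      if c = 0 then pre2 G i [true, false] f.1
      else if c = 1 then pre2 G i [true, true] f.1
      else if c = 2 then pre1 G i f.1
      else pre2 G i [false] f.1

variable {G i}

theorem hmap_prepend (t : Tidx G i) (y : raagCube G) :
    hmap G i (cubePrepend (raagAlph G) (Dfam G i t) y)
      = cubePrepend (raagAlph G) (Rfam G i t) y := by
  match t with
  | Sum.inl _ => exact hmap_pre1' y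
  | Sum.inr (c, f) =>
    fin_cases c
    · simpa [Dfam, Rfam] using hmap_pre0 f.2 y
    · simpa [Dfam, Rfam] using hmap_pre2 f.2 y
    · simpa [Dfam, Rfam] using hmap_pre3 f.2 y
    · simpa [Dfam, Rfam] using hmap_pre4 f.2 y

theorem hinv_prepend (t : Tidx G i) (y : raagCube G) :
    hinv G i (cubePrepend (raagAlph G) (Rfam G i t) y)
      = cubePrepend (raagAlph G) (Dfam G i t) y := by
  match t with
  | Sum.inl _ => exact hinv_pre1' y
  | Sum.inr (c, f) =>
    fin_cases c
    · simpa [Dfam, Rfam] using hinv_pre0 f.2 y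
    · simpa [Dfam, Rfam] using hinv_pre2 f.2 y
    · simpa [Dfam, Rfam] using hinv_pre3 f.2 y
    · simpa [Dfam, Rfam] using hinv_pre4 f.2 y

theorem domain_cover (x : raagCube G) : ∃ t : Tidx G i, x ∈ subcube (raagAlph G) (Dfam G i t) := by
  by_cases hS : x ∈ Scube G i
  · have h0 : ∀ p : PairsAt G i, x (Sum.inr p.1) 0 = ci G i p := (mem_Scube G i).1 hS
    by_cases hSii : x ∈ Sii G i
    · refine ⟨Sum.inl (), ?_⟩
      rw [show Dfam G i (Sum.inl ()) = pre2 G i [] (ci G i) from rfl, ← Sii_eq]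
      exact hSii
    · set g : SymFam G i := fun p => x (Sum.inr p.1) 1 with hg
      have hgne : g ≠ ci G i := by
        intro hc
        exact hSii ((mem_Sii G i).2 fun p => ⟨h0 p, congrFun hc p⟩)
      have hpair : ∀ p : PairsAt G i,
          x (Sum.inr p.1) 0 = ci G i p ∧ x (Sum.inr p.1) 1 = g p :=
        fun p => ⟨h0 p, rfl⟩
      cases hx0 : x (Sum.inl i) 0 with
      | true =>
        refine ⟨Sum.inr (1, ⟨g, hgne⟩), ?_⟩
        rw [show Dfam G i (Sum.inr (1, ⟨g, hgne⟩)) = pre2 G i [true] g from rfl]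
        exact (mem_cube2 G i).2 ⟨beginsWith_one.2 hx0, hpair⟩
      | false =>
        cases hx1 : x (Sum.inl i) 1 with
        | true =>
          refine ⟨Sum.inr (2, ⟨g, hgne⟩), ?_⟩
          rw [show Dfam G i (Sum.inr (2, ⟨g, hgne⟩)) = pre2 G i [false, true] g from rfl]
          exact (mem_cube2 G i).2 ⟨beginsWith_two.2 ⟨hx0, hx1⟩, hpair⟩
        | false =>
          refine ⟨Sum.inr (3, ⟨g, hgne⟩), ?_⟩
          rw [show Dfam G i (Sum.inr (3, ⟨g, hgne⟩)) = pre2 G i [false, false] g from rfl]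
          exact (mem_cube2 G i).2 ⟨beginsWith_two.2 ⟨hx0, hx1⟩, hpair⟩
  · set f : SymFam G i := fun p => x (Sum.inr p.1) 0 with hf
    have hfne : f ≠ ci G i := by
      intro hc
      exact hS ((mem_Scube G i).2 fun p => congrFun hc p)
    refine ⟨Sum.inr (0, ⟨f, hfne⟩), ?_⟩
    rw [show Dfam G i (Sum.inr (0, ⟨f, hfne⟩)) = pre1 G i f from rfl]
    exact (mem_cube1 G i).2 fun p => rfl

theorem range_cover (x : raagCube G) : ∃ t : Tidx G i, x ∈ subcube (raagAlph G) (Rfam G i t) := by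
  by_cases hS : x ∈ Scube G i
  · have h0 : ∀ p : PairsAt G i, x (Sum.inr p.1) 0 = ci G i p := (mem_Scube G i).1 hS
    by_cases hSii : x ∈ Sii G i
    · refine ⟨Sum.inl (), ?_⟩
      rw [show Rfam G i (Sum.inl ()) = pre2 G i [] (ci G i) from rfl, ← Sii_eq]
      exact hSii
    · set g : SymFam G i := fun p => x (Sum.inr p.1) 1 with hg
      have hgne : g ≠ ci G i := by
        intro hc
        exact hSii ((mem_Sii G i).2 fun p => ⟨h0 p, congrFun hc p⟩)
      have hpair : ∀ p : PairsAt G i,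
          x (Sum.inr p.1) 0 = ci G i p ∧ x (Sum.inr p.1) 1 = g p :=
        fun p => ⟨h0 p, rfl⟩
      cases hx0 : x (Sum.inl i) 0 with
      | true =>
        cases hx1 : x (Sum.inl i) 1 with
        | false =>
          refine ⟨Sum.inr (0, ⟨g, hgne⟩), ?_⟩
          rw [show Rfam G i (Sum.inr (0, ⟨g, hgne⟩)) = pre2 G i [true, false] g from rfl]
          exact (mem_cube2 G i).2 ⟨beginsWith_two.2 ⟨hx0, hx1⟩, hpair⟩
        | true =>
          refine ⟨Sum.inr (1, ⟨g, hgne⟩), ?_⟩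
          rw [show Rfam G i (Sum.inr (1, ⟨g, hgne⟩)) = pre2 G i [true, true] g from rfl]
          exact (mem_cube2 G i).2 ⟨beginsWith_two.2 ⟨hx0, hx1⟩, hpair⟩
      | false =>
        refine ⟨Sum.inr (3, ⟨g, hgne⟩), ?_⟩
        rw [show Rfam G i (Sum.inr (3, ⟨g, hgne⟩)) = pre2 G i [false] g from rfl]
        exact (mem_cube2 G i).2 ⟨beginsWith_one.2 hx0, hpair⟩
  · set f : SymFam G i := fun p => x (Sum.inr p.1) 0 with hf
    have hfne : f ≠ ci G i := by
      intro hc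
      exact hS ((mem_Scube G i).2 fun p => congrFun hc p)
    refine ⟨Sum.inr (2, ⟨f, hfne⟩), ?_⟩
    rw [show Rfam G i (Sum.inr (2, ⟨f, hfne⟩)) = pre1 G i f from rfl]
    exact (mem_cube1 G i).2 fun p => rfl

end RearrAux
namespace RearrAux

variable {n : ℕ} {G : SimpleGraph (Fin n)} {i : Fin n}

theorem sub_ne {f f' : NCFam G i} (h : f ≠ f') : f.1 ≠ f'.1 :=
  fun hc => h (Subtype.ext hc)

theorem domain_disjoint (t t' : Tidx G i) (htt : t ≠ t') :
    Disjoint (subcube (raagAlph G) (Dfam G i t)) (subcube (raagAlph G) (Dfam G i t')) := by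
  match t, t' with
  | Sum.inl u, Sum.inl u' => cases u; cases u'; exact absurd rfl htt
  | Sum.inl u, Sum.inr (c, f) =>
    fin_cases c
    · exact (disj_cube1_cube2 f.2 [] (ci G i)).symm
    · exact disj_cube2_cube2 (Ne.symm f.2) [] [true]
    · exact disj_cube2_cube2 (Ne.symm f.2) [] [false, true]
    · exact disj_cube2_cube2 (Ne.symm f.2) [] [false, false]
  | Sum.inr (c, f), Sum.inl u =>
    fin_cases c
    · exact disj_cube1_cube2 f.2 [] (ci G i)
    · exact disj_cube2_cube2 f.2 [true] []
    · exact disj_cube2_cube2 f.2 [false, true] []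
    · exact disj_cube2_cube2 f.2 [false, false] []
  | Sum.inr (c, f), Sum.inr (c', f') =>
    have key : (c, f) ≠ (c', f') := fun h => htt (by rw [h])
    fin_cases c <;> fin_cases c'
    · exact disj_cube1_cube1 (sub_ne fun h => key (by rw [h]))
    · exact disj_cube1_cube2 f.2 [true] f'.1
    · exact disj_cube1_cube2 f.2 [false, true] f'.1
    · exact disj_cube1_cube2 f.2 [false, false] f'.1
    · exact (disj_cube1_cube2 f'.2 [true] f.1).symm
    · exact disj_cube2_cube2 (sub_ne fun h => key (by rw [h])) [true] [true]
    · exact disj_cube2_head (by simp) [] [true] f.1 f'.1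
    · exact disj_cube2_head (by simp) [] [false] f.1 f'.1
    · exact (disj_cube1_cube2 f'.2 [false, true] f.1).symm
    · exact disj_cube2_head (by simp) [true] [] f.1 f'.1
    · exact disj_cube2_cube2 (sub_ne fun h => key (by rw [h])) [false, true] [false, true]
    · exact disj_cube2_second (by simp) [] [] f.1 f'.1
    · exact (disj_cube1_cube2 f'.2 [false, false] f.1).symm
    · exact disj_cube2_head (by simp) [false] [] f.1 f'.1
    · exact disj_cube2_second (by simp) [] [] f.1 f'.1
    · exact disj_cube2_cube2 (sub_ne fun h => key (by rw [h])) [false, false] [false, false]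

theorem range_disjoint (t t' : Tidx G i) (htt : t ≠ t') :
    Disjoint (subcube (raagAlph G) (Rfam G i t)) (subcube (raagAlph G) (Rfam G i t')) := by
  match t, t' with
  | Sum.inl u, Sum.inl u' => cases u; cases u'; exact absurd rfl htt
  | Sum.inl u, Sum.inr (c, f) =>
    fin_cases c
    · exact disj_cube2_cube2 (Ne.symm f.2) [] [true, false]
    · exact disj_cube2_cube2 (Ne.symm f.2) [] [true, true]
    · exact (disj_cube1_cube2 f.2 [] (ci G i)).symm
    · exact disj_cube2_cube2 (Ne.symm f.2) [] [false]
  | Sum.inr (c, f), Sum.inl u =>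
    fin_cases c
    · exact disj_cube2_cube2 f.2 [true, false] []
    · exact disj_cube2_cube2 f.2 [true, true] []
    · exact disj_cube1_cube2 f.2 [] (ci G i)
    · exact disj_cube2_cube2 f.2 [false] []
  | Sum.inr (c, f), Sum.inr (c', f') =>
    have key : (c, f) ≠ (c', f') := fun h => htt (by rw [h])
    fin_cases c <;> fin_cases c'
    · exact disj_cube2_cube2 (sub_ne fun h => key (by rw [h])) [true, false] [true, false]
    · exact disj_cube2_second (by simp) [] [] f.1 f'.1
    · exact (disj_cube1_cube2 f'.2 [true, false] f.1).symm
    · exact disj_cube2_head (by simp) [false] [] f.1 f'.1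
    · exact disj_cube2_second (by simp) [] [] f.1 f'.1
    · exact disj_cube2_cube2 (sub_ne fun h => key (by rw [h])) [true, true] [true, true]
    · exact (disj_cube1_cube2 f'.2 [true, true] f.1).symm
    · exact disj_cube2_head (by simp) [true] [] f.1 f'.1
    · exact disj_cube1_cube2 f.2 [true, false] f'.1
    · exact disj_cube1_cube2 f.2 [true, true] f'.1
    · exact disj_cube1_cube1 (sub_ne fun h => key (by rw [h]))
    · exact disj_cube1_cube2 f.2 [false] f'.1
    · exact disj_cube2_head (by simp) [] [false] f.1 f'.1
    · exact disj_cube2_head (by simp) [] [true] f.1 f'.1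
    · exact (disj_cube1_cube2 f'.2 [false] f.1).symm
    · exact disj_cube2_cube2 (sub_ne fun h => key (by rw [h])) [false] [false]

end RearrAux
namespace RearrAux

variable {n : ℕ} (G : SimpleGraph (Fin n)) (i : Fin n)

def Dset : Fin 5 → Set (raagCube G) :=
  ![(Scube G i)ᶜ, Sii G i,
    (Scube G i \ Sii G i) ∩ Cset G i [true],
    (Scube G i \ Sii G i) ∩ Cset G i [false, true],
    (Scube G i \ Sii G i) ∩ Cset G i [false, false]]

def Rset : Fin 5 → Set (raagCube G) :=
  ![(Scube G i \ Sii G i) ∩ Cset G i [true, false], Sii G i,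
    (Scube G i \ Sii G i) ∩ Cset G i [true, true],
    (Scube G i)ᶜ,
    (Scube G i \ Sii G i) ∩ Cset G i [false]]

variable {G i}

theorem sdB (α : List Bool) :
    Disjoint ((Scube G i)ᶜ) ((Scube G i \ Sii G i) ∩ Cset G i α) :=
  Set.disjoint_left.2 fun _ h1 h2 => h1 h2.1.1

theorem sdA : Disjoint ((Scube G i)ᶜ) (Sii G i) :=
  Set.disjoint_left.2 fun _ h1 h2 => h1 (Sii_subset G i h2)

theorem sdC (α : List Bool) :
    Disjoint (Sii G i) ((Scube G i \ Sii G i) ∩ Cset G i α) :=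
  Set.disjoint_left.2 fun _ h1 h2 => h2.1.2 h1

theorem sdD {a b : Bool} (hab : a ≠ b) (l l' : List Bool) :
    Disjoint ((Scube G i \ Sii G i) ∩ Cset G i (a :: l))
      ((Scube G i \ Sii G i) ∩ Cset G i (b :: l')) :=
  Set.disjoint_left.2 fun _ h1 h2 =>
    hab ((beginsWith_head h1.2).symm.trans (beginsWith_head h2.2))

theorem sdE {a a' b b' : Bool} (hbb : b ≠ b') (l l' : List Bool) :
    Disjoint ((Scube G i \ Sii G i) ∩ Cset G i (a :: b :: l))
      ((Scube G i \ Sii G i) ∩ Cset G i (a' :: b' :: l')) :=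
  Set.disjoint_left.2 fun _ h1 h2 =>
    hbb ((beginsWith_second h1.2).symm.trans (beginsWith_second h2.2))

theorem image_cube (h : raagCube G → raagCube G) (βD βR : ∀ k, List (raagAlph G k))
    (hp : ∀ y, h (cubePrepend (raagAlph G) βD y) = cubePrepend (raagAlph G) βR y) :
    h '' subcube (raagAlph G) βD = subcube (raagAlph G) βR := by
  rw [subcube_eq_range, subcube_eq_range, ← Set.range_comp]
  exact congrArg Set.range (funext hp)

theorem finUnion_of {γ : Type*} [Finite γ] (β : γ → ∀ k, List (raagAlph G k))
    {E : Set (raagCube G)} (hE : E = ⋃ t, subcube (raagAlph G) (β t)) :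
    FinUnionSubcubes (raagAlph G) E := by
  obtain ⟨m, ⟨e⟩⟩ := Finite.exists_equiv_fin γ
  refine ⟨m, fun a => β (e.symm a), ?_⟩
  rw [hE]
  ext x
  simp only [Set.mem_iUnion]
  exact ⟨fun ⟨t, ht⟩ => ⟨e t, by simpa using ht⟩, fun ⟨a, ha⟩ => ⟨e.symm a, ha⟩⟩

theorem dset_cover : (⋃ a, Dset G i a) = Set.univ := by
  rw [Set.eq_univ_iff_forall]
  intro x
  rw [Set.mem_iUnion]
  obtain ⟨t, hx⟩ := domain_cover (i := i) x
  match t with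
  | Sum.inl u =>
    refine ⟨1, ?_⟩
    show x ∈ Sii G i
    rw [Sii_eq]; exact hx
  | Sum.inr (c, f) =>
    fin_cases c
    · refine ⟨0, ?_⟩
      show x ∈ (Scube G i)ᶜ
      rw [compl_Scube_eq]; exact Set.mem_iUnion.2 ⟨f, hx⟩
    · refine ⟨2, ?_⟩
      show x ∈ (Scube G i \ Sii G i) ∩ Cset G i [true]
      rw [piece_eq]; exact Set.mem_iUnion.2 ⟨f, hx⟩
    · refine ⟨3, ?_⟩
      show x ∈ (Scube G i \ Sii G i) ∩ Cset G i [false, true]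
      rw [piece_eq]; exact Set.mem_iUnion.2 ⟨f, hx⟩
    · refine ⟨4, ?_⟩
      show x ∈ (Scube G i \ Sii G i) ∩ Cset G i [false, false]
      rw [piece_eq]; exact Set.mem_iUnion.2 ⟨f, hx⟩

theorem rset_cover : (⋃ a, Rset G i a) = Set.univ := by
  rw [Set.eq_univ_iff_forall]
  intro x
  rw [Set.mem_iUnion]
  obtain ⟨t, hx⟩ := range_cover (i := i) x
  match t with
  | Sum.inl u =>
    refine ⟨1, ?_⟩
    show x ∈ Sii G i
    rw [Sii_eq]; exact hx
  | Sum.inr (c, f) =>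
    fin_cases c
    · refine ⟨0, ?_⟩
      show x ∈ (Scube G i \ Sii G i) ∩ Cset G i [true, false]
      rw [piece_eq]; exact Set.mem_iUnion.2 ⟨f, hx⟩
    · refine ⟨2, ?_⟩
      show x ∈ (Scube G i \ Sii G i) ∩ Cset G i [true, true]
      rw [piece_eq]; exact Set.mem_iUnion.2 ⟨f, hx⟩
    · refine ⟨3, ?_⟩
      show x ∈ (Scube G i)ᶜ
      rw [compl_Scube_eq]; exact Set.mem_iUnion.2 ⟨f, hx⟩
    · refine ⟨4, ?_⟩
      show x ∈ (Scube G i \ Sii G i) ∩ Cset G i [false]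
      rw [piece_eq]; exact Set.mem_iUnion.2 ⟨f, hx⟩

theorem dset_disjoint (a b : Fin 5) (hab : a ≠ b) : Disjoint (Dset G i a) (Dset G i b) := by
  fin_cases a <;> fin_cases b
  · exact absurd rfl hab
  · exact sdA
  · exact sdB [true]
  · exact sdB [false, true]
  · exact sdB [false, false]
  · exact sdA.symm
  · exact absurd rfl hab
  · exact sdC [true]
  · exact sdC [false, true]
  · exact sdC [false, false]
  · exact (sdB [true]).symm
  · exact (sdC [true]).symm
  · exact absurd rfl hab
  · exact sdD (by simp) [] [true]
  · exact sdD (by simp) [] [false]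
  · exact (sdB [false, true]).symm
  · exact (sdC [false, true]).symm
  · exact sdD (by simp) [true] []
  · exact absurd rfl hab
  · exact sdE (by simp) [] []
  · exact (sdB [false, false]).symm
  · exact (sdC [false, false]).symm
  · exact sdD (by simp) [false] []
  · exact sdE (by simp) [] []
  · exact absurd rfl hab

theorem rset_disjoint (a b : Fin 5) (hab : a ≠ b) : Disjoint (Rset G i a) (Rset G i b) := by
  fin_cases a <;> fin_cases b
  · exact absurd rfl hab
  · exact (sdC [true, false]).symm
  · exact sdE (by simp) [] []
  · exact (sdB [true, false]).symm
  · exact sdD (by simp) [false] []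
  · exact sdC [true, false]
  · exact absurd rfl hab
  · exact sdC [true, true]
  · exact sdA.symm
  · exact sdC [false]
  · exact sdE (by simp) [] []
  · exact (sdC [true, true]).symm
  · exact absurd rfl hab
  · exact (sdB [true, true]).symm
  · exact sdD (by simp) [true] []
  · exact sdB [true, false]
  · exact sdA
  · exact sdB [true, true]
  · exact absurd rfl hab
  · exact sdB [false]
  · exact sdD (by simp) [] [false]
  · exact (sdC [false]).symm
  · exact sdD (by simp) [] [true]
  · exact (sdB [false]).symm
  · exact absurd rfl hab

theorem dset_finUnion (a : Fin 5) : FinUnionSubcubes (raagAlph G) (Dset G i a) := by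
  fin_cases a
  · exact finUnion_of (fun f : NCFam G i => pre1 G i f.1) (compl_Scube_eq G i)
  · show FinUnionSubcubes (raagAlph G) (Sii G i)
    exact finUnion_of (fun _ : Unit => pre2 G i [] (ci G i))
      (by rw [Sii_eq]; exact (Set.iUnion_const _).symm)
  · exact finUnion_of (fun f : NCFam G i => pre2 G i [true] f.1) (piece_eq G i [true])
  · exact finUnion_of (fun f : NCFam G i => pre2 G i [false, true] f.1)
      (piece_eq G i [false, true])
  · exact finUnion_of (fun f : NCFam G i => pre2 G i [false, false] f.1)
      (piece_eq G i [false, false])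

theorem rset_finUnion (a : Fin 5) : FinUnionSubcubes (raagAlph G) (Rset G i a) := by
  fin_cases a
  · exact finUnion_of (fun f : NCFam G i => pre2 G i [true, false] f.1)
      (piece_eq G i [true, false])
  · show FinUnionSubcubes (raagAlph G) (Sii G i)
    exact finUnion_of (fun _ : Unit => pre2 G i [] (ci G i))
      (by rw [Sii_eq]; exact (Set.iUnion_const _).symm)
  · exact finUnion_of (fun f : NCFam G i => pre2 G i [true, true] f.1)
      (piece_eq G i [true, true])
  · exact finUnion_of (fun f : NCFam G i => pre1 G i f.1) (compl_Scube_eq G i)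
  · exact finUnion_of (fun f : NCFam G i => pre2 G i [false] f.1) (piece_eq G i [false])

theorem hmap_image (a : Fin 5) : hmap G i '' Dset G i a = Rset G i a := by
  fin_cases a
  · show hmap G i '' (Scube G i)ᶜ = (Scube G i \ Sii G i) ∩ Cset G i [true, false]
    rw [compl_Scube_eq, piece_eq, Set.image_iUnion]
    exact Set.iUnion_congr fun f => image_cube _ _ _ fun y => hmap_pre0 f.2 y
  · show hmap G i '' Sii G i = Sii G i
    rw [Sii_eq]
    exact image_cube _ _ _ fun y => hmap_pre1' y
  · show hmap G i '' ((Scube G i \ Sii G i) ∩ Cset G i [true])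
        = (Scube G i \ Sii G i) ∩ Cset G i [true, true]
    rw [piece_eq, piece_eq, Set.image_iUnion]
    exact Set.iUnion_congr fun f => image_cube _ _ _ fun y => hmap_pre2 f.2 y
  · show hmap G i '' ((Scube G i \ Sii G i) ∩ Cset G i [false, true]) = (Scube G i)ᶜ
    rw [piece_eq, compl_Scube_eq, Set.image_iUnion]
    exact Set.iUnion_congr fun f => image_cube _ _ _ fun y => hmap_pre3 f.2 y
  · show hmap G i '' ((Scube G i \ Sii G i) ∩ Cset G i [false, false])
        = (Scube G i \ Sii G i) ∩ Cset G i [false]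
    rw [piece_eq, piece_eq, Set.image_iUnion]
    exact Set.iUnion_congr fun f => image_cube _ _ _ fun y => hmap_pre4 f.2 y

end RearrAux
namespace RearrAux

variable {n : ℕ} (G : SimpleGraph (Fin n)) (i : Fin n)

theorem hmap_leftInv : Function.LeftInverse (hinv G i) (hmap G i) := by
  intro x
  obtain ⟨t, hx⟩ := domain_cover (i := i) x
  rw [eq_prepend_drop hx, hmap_prepend t, hinv_prepend t]

theorem hmap_rightInv : Function.RightInverse (hinv G i) (hmap G i) := by
  intro x
  obtain ⟨t, hx⟩ := range_cover (i := i) x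
  rw [eq_prepend_drop hx, hinv_prepend t, hmap_prepend t]

/-- The homeomorphism `h_i`. -/
noncomputable def hHomeo : raagCube G ≃ₜ raagCube G where
  toFun := hmap G i
  invFun := hinv G i
  left_inv := hmap_leftInv G i
  right_inv := hmap_rightInv G i
  continuous_toFun :=
    continuous_of_cover (Dfam G i) (Rfam G i) (hmap G i) domain_cover hmap_prepend
  continuous_invFun :=
    continuous_of_cover (Rfam G i) (Dfam G i) (hinv G i) range_cover hinv_prepend

theorem hHomeo_coe : ⇑(hHomeo G i) = hmap G i := rfl

theorem hHomeo_isRearrangement : IsRearrangement (raagAlph G) (hHomeo G i) := by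
  obtain ⟨m, ⟨e⟩⟩ := Finite.exists_equiv_fin (Tidx G i)
  refine ⟨m, fun a => Dfam G i (e.symm a), fun a => Rfam G i (e.symm a),
    ?_, ?_, ?_, ?_, ?_⟩
  · rw [Set.eq_univ_iff_forall]
    intro x
    obtain ⟨t, hx⟩ := domain_cover (i := i) x
    exact Set.mem_iUnion.2 ⟨e t, by simpa using hx⟩
  · intro a b hab
    exact domain_disjoint _ _ (e.symm.injective.ne hab)
  · rw [Set.eq_univ_iff_forall]
    intro x
    obtain ⟨t, hx⟩ := range_cover (i := i) x
    exact Set.mem_iUnion.2 ⟨e t, by simpa using hx⟩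
  · intro a b hab
    exact range_disjoint _ _ (e.symm.injective.ne hab)
  · intro a y
    exact hmap_prepend (e.symm a) y

end RearrAux
/-- The five domain pieces and five range pieces of the definition of `h_i` are
partitions of `X` into finite unions of subcubes, and `h_i` is a rearrangement. -/
theorem hmap_pieces_partition_and_rearrangement (G : SimpleGraph (Fin n)) (i : Fin n) :
    (let D : Fin 5 → Set (raagCube G) :=
      ![(Scube G i)ᶜ, Sii G i,
        (Scube G i \ Sii G i) ∩ Cset G i [true],
        (Scube G i \ Sii G i) ∩ Cset G i [false, true],
        (Scube G i \ Sii G i) ∩ Cset G i [false, false]]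
    let R : Fin 5 → Set (raagCube G) :=
      ![(Scube G i \ Sii G i) ∩ Cset G i [true, false], Sii G i,
        (Scube G i \ Sii G i) ∩ Cset G i [true, true],
        (Scube G i)ᶜ,
        (Scube G i \ Sii G i) ∩ Cset G i [false]]
    (⋃ a, D a) = Set.univ ∧ (∀ a b, a ≠ b → Disjoint (D a) (D b)) ∧
    (⋃ a, R a) = Set.univ ∧ (∀ a b, a ≠ b → Disjoint (R a) (R b)) ∧
    (∀ a, FinUnionSubcubes (raagAlph G) (D a)) ∧
    (∀ a, FinUnionSubcubes (raagAlph G) (R a)) ∧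
    (∀ a, hmap G i '' D a = R a)) ∧
    ∃ H : raagCube G ≃ₜ raagCube G,
      ⇑H = hmap G i ∧ IsRearrangement (raagAlph G) H := by
  refine ⟨⟨RearrAux.dset_cover, RearrAux.dset_disjoint, RearrAux.rset_cover,
    RearrAux.rset_disjoint, RearrAux.dset_finUnion, RearrAux.rset_finUnion,
    RearrAux.hmap_image⟩,
    ⟨RearrAux.hHomeo G i, RearrAux.hHomeo_coe G i, RearrAux.hHomeo_isRearrangement G i⟩⟩
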